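/- Consider the 1D interface problem with two blocks, where Q = e_I⁻ (p_I⁻)ᵀ − e_I⁺ (p_I⁺)ᵀ. Along solutions of the penalized interface system (with penalty parameters τ⁻, τ⁺, σ⁻, σ⁺), the discrete energy E = (1/2)Pᵀ A_P P + (1/2)Vᵀ A_V V satisfies E' = (−1−τ⁻−σ⁻)(Pᵀe_I⁻)((p_I⁻)ᵀV) + (τ⁻−σ⁺)(Pᵀe_I⁻)((p_I⁺)ᵀV) + (−τ⁺+σ⁻)(Pᵀe_I⁺)((p_I⁻)ᵀV) + (1+τ⁺+σ⁺)(Pᵀe_I⁺)((p_I⁺)ᵀV). In particular, if τ⁻ = τ⁺ = σ⁻ = σ⁺ = −1/2 then E' = 0. -/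

import Mathlib

open Matrix

lemma quad_deriv {n : ℕ} (A : Matrix (Fin n) (Fin n) ℝ) (f f' : ℝ → Fin n → ℝ)
    (hf : ∀ t, HasDerivAt f (f' t) t) (t : ℝ) :
    HasDerivAt (fun s => f s ⬝ᵥ A.mulVec (f s))
      (f' t ⬝ᵥ A.mulVec (f t) + f t ⬝ᵥ A.mulVec (f' t)) t := by
  have hcomp : ∀ i (s : ℝ), HasDerivAt (fun u => f u i) (f' s i) s :=
    fun i s => (hasDerivAt_pi.mp (hf s)) i
  have hinner : ∀ i (s : ℝ), HasDerivAt (fun u => ∑ j, A i j * f u j)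
      (∑ j, A i j * f' s j) s := by
    intro i s
    exact HasDerivAt.fun_sum (fun j _ => (hcomp j s).const_mul (A i j))
  have h : HasDerivAt (fun s => ∑ i, f s i * ∑ j, A i j * f s j)
      (∑ i, (f' t i * (∑ j, A i j * f t j) + f t i * (∑ j, A i j * f' t j))) t :=
    HasDerivAt.fun_sum (fun i _ => (hcomp i t).mul (hinner i t))
  have e1 : (fun s => f s ⬝ᵥ A.mulVec (f s)) =
      fun s => ∑ i, f s i * ∑ j, A i j * f s j := by
    funext s; simp [dotProduct, mulVec]
  have e2 : f' t ⬝ᵥ A.mulVec (f t) + f t ⬝ᵥ A.mulVec (f' t) =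
      ∑ i, (f' t i * (∑ j, A i j * f t j) + f t i * (∑ j, A i j * f' t j)) := by
    simp [dotProduct, mulVec, Finset.sum_add_distrib]
  rw [e1, e2]; exact h

/-- Energy rate for the 1D SAT-penalized interface system, and conservation for
    τ⁻ = τ⁺ = σ⁻ = σ⁺ = -1/2. -/
theorem stmt4 {NP NV : ℕ}
    (AP : Matrix (Fin NP) (Fin NP) ℝ) (AV : Matrix (Fin NV) (Fin NV) ℝ)
    (DV : Matrix (Fin NP) (Fin NV) ℝ) (DP : Matrix (Fin NV) (Fin NP) ℝ)
    (hAP : AP.PosDef) (hAV : AV.PosDef)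
    (eIm eIp : Fin NP → ℝ) (iM iP : Fin NP) (hiM : eIm = Pi.single iM 1)
    (hiP : eIp = Pi.single iP 1)
    (pIm pIp : Fin NV → ℝ)
    (hQ : AP * DV + (AV * DP)ᵀ = vecMulVec eIm pIm - vecMulVec eIp pIp)
    (τm τp σm σp : ℝ)
    (P : ℝ → Fin NP → ℝ) (V : ℝ → Fin NV → ℝ)
    (P' : ℝ → Fin NP → ℝ) (V' : ℝ → Fin NV → ℝ)
    (hP : ∀ t, HasDerivAt P (P' t) t) (hV : ∀ t, HasDerivAt V (V' t) t)
    (hPode : ∀ t, AP.mulVec (P' t) = -((AP * DV).mulVec (V t))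
      + ((pIp ⬝ᵥ V t) - (pIm ⬝ᵥ V t)) • (τm • eIm + τp • eIp))
    (hVode : ∀ t, AV.mulVec (V' t) = -((AV * DP).mulVec (P t))
      + ((eIp ⬝ᵥ P t) - (eIm ⬝ᵥ P t)) • (σm • pIm + σp • pIp)) :
    (∀ t, HasDerivAt
      (fun s => (1/2) * (P s ⬝ᵥ AP.mulVec (P s)) + (1/2) * (V s ⬝ᵥ AV.mulVec (V s)))
      ((-1 - τm - σm) * (P t ⬝ᵥ eIm) * (pIm ⬝ᵥ V t)
        + (τm - σp) * (P t ⬝ᵥ eIm) * (pIp ⬝ᵥ V t)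
        + (-τp + σm) * (P t ⬝ᵥ eIp) * (pIm ⬝ᵥ V t)
        + (1 + τp + σp) * (P t ⬝ᵥ eIp) * (pIp ⬝ᵥ V t)) t) ∧
    ((τm = -1/2 ∧ τp = -1/2 ∧ σm = -1/2 ∧ σp = -1/2) →
      ∀ t, HasDerivAt
        (fun s => (1/2) * (P s ⬝ᵥ AP.mulVec (P s)) + (1/2) * (V s ⬝ᵥ AV.mulVec (V s)))
        0 t) := by
  have hAPsym : APᵀ = AP := hAP.isHermitian.eq
  have hAVsym : AVᵀ = AV := hAV.isHermitian.eq
  -- symmetry of quadratic forms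
  have symP : ∀ (u v : Fin NP → ℝ), u ⬝ᵥ AP.mulVec v = v ⬝ᵥ AP.mulVec u := by
    intro u v
    rw [dotProduct_mulVec, ← mulVec_transpose, hAPsym, dotProduct_comm]
  have symV : ∀ (u v : Fin NV → ℝ), u ⬝ᵥ AV.mulVec v = v ⬝ᵥ AV.mulVec u := by
    intro u v
    rw [dotProduct_mulVec, ← mulVec_transpose, hAVsym, dotProduct_comm]
  have key : ∀ t,
      (1/2) * (P' t ⬝ᵥ AP.mulVec (P t) + P t ⬝ᵥ AP.mulVec (P' t))
      + (1/2) * (V' t ⬝ᵥ AV.mulVec (V t) + V t ⬝ᵥ AV.mulVec (V' t))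
      = (-1 - τm - σm) * (P t ⬝ᵥ eIm) * (pIm ⬝ᵥ V t)
        + (τm - σp) * (P t ⬝ᵥ eIm) * (pIp ⬝ᵥ V t)
        + (-τp + σm) * (P t ⬝ᵥ eIp) * (pIm ⬝ᵥ V t)
        + (1 + τp + σp) * (P t ⬝ᵥ eIp) * (pIp ⬝ᵥ V t) := by
    intro t
    rw [symP (P' t) (P t), symV (V' t) (V t)]
    have hcross : V t ⬝ᵥ (AV * DP).mulVec (P t) = P t ⬝ᵥ ((AV * DP)ᵀ).mulVec (V t) := by
      rw [dotProduct_mulVec, ← mulVec_transpose, dotProduct_comm]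
    have hQ' : P t ⬝ᵥ (AP * DV).mulVec (V t) + P t ⬝ᵥ ((AV * DP)ᵀ).mulVec (V t)
        = (P t ⬝ᵥ eIm) * (pIm ⬝ᵥ V t) - (P t ⬝ᵥ eIp) * (pIp ⬝ᵥ V t) := by
      rw [← dotProduct_add, ← add_mulVec, hQ, sub_mulVec, dotProduct_sub]
      simp [vecMulVec_apply, mulVec, dotProduct, Finset.mul_sum, Finset.sum_mul,
        mul_assoc]
      rw [Finset.sum_comm]
      congr 1
      exact Finset.sum_comm
    rw [hPode t, hVode t]
    simp only [dotProduct_add, dotProduct_neg, dotProduct_smul, smul_add,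
      smul_eq_mul, dotProduct_smul]
    rw [hcross]
    have c1 : eIm ⬝ᵥ P t = P t ⬝ᵥ eIm := dotProduct_comm _ _
    have c2 : eIp ⬝ᵥ P t = P t ⬝ᵥ eIp := dotProduct_comm _ _
    have c3 : V t ⬝ᵥ pIm = pIm ⬝ᵥ V t := dotProduct_comm _ _
    have c4 : V t ⬝ᵥ pIp = pIp ⬝ᵥ V t := dotProduct_comm _ _
    rw [c1, c2, c3, c4]
    nlinarith [hQ', sq_nonneg (P t ⬝ᵥ eIm)]
  have main : ∀ t, HasDerivAt
      (fun s => (1/2) * (P s ⬝ᵥ AP.mulVec (P s)) + (1/2) * (V s ⬝ᵥ AV.mulVec (V s)))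
      ((-1 - τm - σm) * (P t ⬝ᵥ eIm) * (pIm ⬝ᵥ V t)
        + (τm - σp) * (P t ⬝ᵥ eIm) * (pIp ⬝ᵥ V t)
        + (-τp + σm) * (P t ⬝ᵥ eIp) * (pIm ⬝ᵥ V t)
        + (1 + τp + σp) * (P t ⬝ᵥ eIp) * (pIp ⬝ᵥ V t)) t := by
    intro t
    have h1 := (quad_deriv AP P P' hP t).const_mul (1/2 : ℝ)
    have h2 := (quad_deriv AV V V' hV t).const_mul (1/2 : ℝ)
    have h := h1.add h2
    rw [key t] at h
    exact h
  refine ⟨main, ?_⟩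
  rintro ⟨h1, h2, h3, h4⟩ t
  have h := main t
  subst h1 h2 h3 h4
  norm_num at h
  convert h using 1
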